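/- Let G be a nontrivial abelian metrizable group, X an uncountable G-Tychonoff first countable space, g ∈ G nonzero, and H a subspace of G^X containing σ(𝟎, g) ∪ {𝐠}. Then H does not have countable tightness: the constant function 𝐠 is in the closure of A := σ(𝟎, g) in H, but 𝐠 is not in the closure of any countable subset of A. -/

import Mathlib

open Filter Topology

/-- `X` is `G`-Tychonoff: every point outside a closed set can be completely separated
from it by a continuous `G`-valued function taking prescribed (distinct) values. -/
def GTychonoff (X G : Type*) [TopologicalSpace X] [TopologicalSpace G] : Prop :=
  ∀ A : Set X, IsClosed A → ∀ x ∉ A, ∀ y z : G, y ≠ z →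
    ∃ f : X → G, Continuous f ∧ f x = y ∧ ∀ a ∈ A, f a = z

/-- `H` does not have countable tightness: the constant function `𝐠` lies in the closure of
`A = σ(𝟎, g)` in `H`, but not in the closure of any countable subset of `A`. -/
theorem stmt15 {G X : Type*} [AddCommGroup G] [TopologicalSpace G] [IsTopologicalAddGroup G]
    [TopologicalSpace.MetrizableSpace G]
    [TopologicalSpace X] [FirstCountableTopology X] [Uncountable X]
    (hXG : GTychonoff X G) (g : G) (hg : g ≠ 0)
    (H : Set (X → G))
    (hσ : {h : X → G | {x | h x ≠ 0}.Finite ∧ ∀ x, h x ≠ 0 → h x = g} ⊆ H)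
    (hconst : (fun _ : X => g) ∈ H) :
    (⟨fun _ => g, hconst⟩ : ↥H) ∈
        closure {h : ↥H | {x | h.1 x ≠ 0}.Finite ∧ ∀ x, h.1 x ≠ 0 → h.1 x = g} ∧
      ∀ B ⊆ {h : ↥H | {x | h.1 x ≠ 0}.Finite ∧ ∀ x, h.1 x ≠ 0 → h.1 x = g},
        B.Countable → (⟨fun _ => g, hconst⟩ : ↥H) ∉ closure B := by
  classical
  letI : MetricSpace G := TopologicalSpace.metrizableSpaceMetric G
  constructor
  · -- the net of indicators of finite sets converges to the constant `g`
    have hmem : ∀ F : Finset X,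
        (fun x => if x ∈ F then g else 0) ∈
          {h : X → G | {x | h x ≠ 0}.Finite ∧ ∀ x, h x ≠ 0 → h x = g} := by
      intro F
      constructor
      · apply (F.finite_toSet).subset
        intro x hx
        simp only [Set.mem_setOf_eq] at hx
        by_contra hxF
        simp [hxF] at hx
        exact hxF (Finset.mem_coe.mpr hx.1)
      · intro x hx
        by_cases hxF : x ∈ F <;> simp [hxF] at hx ⊢
    set φ : Finset X → ↥H := fun F => ⟨fun x => if x ∈ F then g else 0, hσ (hmem F)⟩
    have htend : Tendsto φ atTop (𝓝 (⟨fun _ => g, hconst⟩ : ↥H)) := by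
      rw [tendsto_subtype_rng]
      rw [tendsto_pi_nhds]
      intro x
      apply tendsto_const_nhds.congr'
      filter_upwards [Filter.eventually_ge_atTop ({x} : Finset X)] with F hF
      have : x ∈ F := hF (Finset.mem_singleton_self x)
      simp [φ, this]
    exact mem_closure_of_tendsto htend (Filter.Eventually.of_forall fun F => hmem F)
  · rintro B hB hBc hcl
    -- the union of supports is countable; pick a point outside
    have hS : (⋃ h ∈ B, {x | (h : ↥H).1 x ≠ 0}).Countable :=
      Set.Countable.biUnion hBc fun h hh => ((hB hh).1).countable
    have : ¬ (Set.univ : Set X).Countable := fun hc =>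
      (Set.not_countable_univ (α := X)) hc
    obtain ⟨x₀, hx₀⟩ : ∃ x₀, x₀ ∉ ⋃ h ∈ B, {x | (h : ↥H).1 x ≠ 0} := by
      by_contra hall
      push_neg at hall
      exact this (Set.Countable.mono (fun x _ => hall x) hS)
    -- evaluation at x₀ is continuous; all of B vanishes at x₀
    have hclosed : IsClosed {h : ↥H | h.1 x₀ = 0} := by
      have : Continuous fun h : ↥H => h.1 x₀ :=
        (continuous_apply x₀).comp continuous_subtype_val
      exact isClosed_singleton.preimage this
    have hBsub : B ⊆ {h : ↥H | h.1 x₀ = 0} := by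
      intro h hh
      by_contra hne
      exact hx₀ (Set.mem_biUnion hh hne)
    have := (hclosed.closure_subset_iff.2 hBsub) hcl
    exact hg this
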